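/- Let f₁,…,fₙ : ℝ → ℝ be twice continuously differentiable functions that are nonvanishing and have nonvanishing first derivatives, and let f : ℝⁿ → ℝ be defined by f(x₁,…,xₙ) = f₁(x₁)·…·fₙ(xₙ). Then at every point x the determinant of the Hessian matrix of f satisfies det H(f)(x) = f(x)ⁿ · [ (f₁''/f₁) · ∏_{i=2}^{n} (fᵢ'/fᵢ)' + (f₁'/f₁)' · Σ_{i=2}^{n} ( ∏_{2 ≤ k ≤ n, k ≠ i} (f_k'/f_k)' ) · (fᵢ'/fᵢ)² ], where all single-variable derivatives are evaluated at the corresponding coordinate xᵢ. -/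

import Mathlib

open Real Finset

/-- The partial derivative of `f : ℝⁿ → ℝ` in the `i`-th coordinate direction. -/
noncomputable def pderiv' {n : ℕ} (f : (Fin n → ℝ) → ℝ) (i : Fin n) (x : Fin n → ℝ) : ℝ :=
  deriv (fun t => f (Function.update x i t)) (x i)

/-- The Hessian matrix of second-order partial derivatives of `f : ℝⁿ → ℝ`. -/
noncomputable def hessian {n : ℕ} (f : (Fin n → ℝ) → ℝ) (x : Fin n → ℝ) :
    Matrix (Fin n) (Fin n) ℝ :=
  Matrix.of fun i j => pderiv' (pderiv' f j) i x



lemma det_updateRow_one {N : ℕ} (i : Fin N) (g : Fin N → ℝ) :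
    ((1 : Matrix (Fin N) (Fin N) ℝ).updateRow i g).det = g i := by
  rw [← Matrix.det_transpose, ← Matrix.updateCol_transpose, Matrix.transpose_one,
    ← Matrix.cramer_apply, Matrix.cramer_one]
  rfl

lemma det_diag_add_rank_one {N : ℕ} (d g : Fin N → ℝ) :
    (Matrix.of fun i j => (if i = j then d i else 0) + g i * g j).det
      = ∏ i, d i + ∑ i, g i ^ 2 * ∏ k ∈ univ.erase i, d k := by
  classical
  set E : Fin N → Fin N → ℝ := fun i => Pi.single i 1 with hE
  have hE1 : Matrix.of E = (1 : Matrix (Fin N) (Fin N) ℝ) := by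
    ext i j
    simp [hE, Pi.single_apply, Matrix.one_apply, eq_comm]
  have hM : (Matrix.of fun i j => (if i = j then d i else 0) + g i * g j)
      = ((fun i => d i • E i) + fun i => g i • g) := by
    ext i j
    by_cases h : i = j <;>
      simp [h, hE, Pi.single_apply, eq_comm]
  rw [hM]
  show (Matrix.detRowAlternating ((fun i => d i • E i) + fun i => g i • g)) = _
  have hadd := (Matrix.detRowAlternating (R := ℝ) (n := Fin N)).toMultilinearMap.map_add_univ
    (fun i => d i • E i) (fun i => g i • g)
  simp only [AlternatingMap.coe_multilinearMap] at hadd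
  rw [hadd]
  have key : ∀ s : Finset (Fin N),
      Matrix.detRowAlternating (s.piecewise (fun i => d i • E i) (fun i => g i • g))
        = (∏ i, s.piecewise d g i) * Matrix.detRowAlternating (s.piecewise E fun _ => g) := by
    intro s
    have : s.piecewise (fun i => d i • E i) (fun i => g i • g)
        = fun i => (s.piecewise d g i) • (s.piecewise E (fun _ => g) i) := by
      funext i
      by_cases h : i ∈ s <;> simp [Finset.piecewise, h]
    rw [this]
    have hsm := (Matrix.detRowAlternating (R := ℝ) (n := Fin N)).toMultilinearMap.map_smul_univ
      (s.piecewise d g) (s.piecewise E fun _ => g)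
    simp only [AlternatingMap.coe_multilinearMap, smul_eq_mul] at hsm
    exact hsm
  simp only [key]
  -- now sum over all finsets
  set h : Finset (Fin N) → ℝ := fun s =>
    (∏ i, s.piecewise d g i) * Matrix.detRowAlternating (s.piecewise E fun _ => g) with hh
  show ∑ s : Finset (Fin N), h s = _
  set T : Finset (Finset (Fin N)) :=
    insert Finset.univ ((Finset.univ : Finset (Fin N)).image fun i => Finset.univ.erase i) with hT
  have hzero : ∀ s ∈ (Finset.univ : Finset (Finset (Fin N))), s ∉ T → h s = 0 := by
    intro s _ hs
    have hsu : s ≠ Finset.univ := by rintro rfl; exact hs (Finset.mem_insert_self _ _)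
    obtain ⟨i, hi⟩ : ∃ i, i ∉ s := by
      by_contra hc
      push_neg at hc
      exact hsu (Finset.eq_univ_iff_forall.2 hc)
    have hse : s ≠ Finset.univ.erase i := by
      rintro rfl
      exact hs (Finset.mem_insert_of_mem (Finset.mem_image_of_mem _ (Finset.mem_univ i)))
    obtain ⟨j, hj, hji⟩ : ∃ j, j ∉ s ∧ j ≠ i := by
      by_contra hc
      push_neg at hc
      apply hse
      ext k
      simp only [Finset.mem_erase, Finset.mem_univ, and_true]
      constructor
      · intro hk
        rintro rfl
        exact hi hk
      · intro hk
        by_contra hks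
        exact hk (hc k hks)
    have : Matrix.detRowAlternating (s.piecewise E fun _ => g) = 0 := by
      apply Matrix.detRowAlternating.map_eq_zero_of_eq _ _ hji
      simp [Finset.piecewise_eq_of_notMem _ _ _ hj, Finset.piecewise_eq_of_notMem _ _ _ hi]
    rw [hh]; simp [this]
  rw [← Finset.sum_subset (Finset.subset_univ T) hzero]
  have hnotmem : Finset.univ ∉ ((Finset.univ : Finset (Fin N)).image fun i => Finset.univ.erase i) := by
    simp only [Finset.mem_image, Finset.mem_univ, true_and, not_exists]
    intro i hi
    have := Finset.mem_univ i
    rw [← hi] at this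
    exact (Finset.notMem_erase i _) this
  rw [hT, Finset.sum_insert hnotmem, Finset.sum_image (by
    intro i _ j _ hij
    by_contra hne
    have : j ∈ Finset.univ.erase i := by simp [Ne.symm hne]
    rw [show univ.erase i = univ.erase j from hij] at this
    exact (Finset.notMem_erase j _) this)]
  congr 1
  · simp only [hh]
    simp only [Finset.piecewise_univ]
    rw [show Matrix.detRowAlternating E = Matrix.det (Matrix.of E) from rfl, hE1, Matrix.det_one,
      mul_one]
  · apply Finset.sum_congr rfl
    intro i _
    simp only [hh]
    have h1 : ∏ k, (Finset.univ.erase i).piecewise d g k = g i * ∏ k ∈ Finset.univ.erase i, d k := by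
      rw [← Finset.mul_prod_erase Finset.univ _ (Finset.mem_univ i)]
      congr 1
      · simp [Finset.piecewise_eq_of_notMem _ _ _ (Finset.notMem_erase i _)]
      · exact Finset.prod_congr rfl fun k hk => Finset.piecewise_eq_of_mem _ _ _ hk
    have h2 : (Finset.univ.erase i).piecewise E (fun _ => g) = (Matrix.of E).updateRow i g := by
      funext k
      by_cases h : k = i
      · subst h
        simp [Finset.piecewise_eq_of_notMem _ _ _ (Finset.notMem_erase k _)]
      · rw [Finset.piecewise_eq_of_mem _ _ _ (by simp [h] : k ∈ Finset.univ.erase i),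
          Matrix.updateRow_ne h]
        rfl
    rw [h1, h2]
    rw [show Matrix.detRowAlternating ((Matrix.of E).updateRow i g)
        = Matrix.det ((Matrix.of E).updateRow i g) from rfl, hE1, det_updateRow_one]
    ring

lemma alg_aux {N : ℕ} (dd g : Fin (N+1) → ℝ) (h0 : ℝ) (hh0 : h0 = dd 0 + g 0 ^ 2) :
    ∏ i, dd i + ∑ i, g i ^ 2 * ∏ k ∈ univ.erase i, dd k
      = h0 * ∏ i ∈ univ.erase 0, dd i
        + dd 0 * ∑ i ∈ univ.erase 0, (∏ k ∈ (univ.erase 0).erase i, dd k) * g i ^ 2 := by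
  subst hh0
  rw [← Finset.add_sum_erase _ _ (Finset.mem_univ (0 : Fin (N+1))),
    ← Finset.mul_prod_erase Finset.univ dd (Finset.mem_univ 0), Finset.mul_sum]
  have key : ∀ i ∈ univ.erase (0 : Fin (N+1)),
      g i ^ 2 * ∏ k ∈ univ.erase i, dd k
        = dd 0 * ((∏ k ∈ (univ.erase 0).erase i, dd k) * g i ^ 2) := by
    intro i hi
    have h0i : (0 : Fin (N+1)) ∈ univ.erase i := by
      simp [Ne.symm (Finset.mem_erase.1 hi).1]
    rw [← Finset.mul_prod_erase _ dd h0i, Finset.erase_right_comm]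
    ring
  rw [Finset.sum_congr rfl key]
  ring


/-- Lemma 3.1: the Hessian determinant of a multiplicatively separable
(homothetical) function `f(x₁,…,xₙ) = f₁(x₁)⋯fₙ(xₙ)` with nonvanishing C²
components having nonvanishing first derivatives. -/
theorem stmt_0 (n : ℕ) (F : Fin (n + 1) → ℝ → ℝ)
    (hC2 : ∀ i, ContDiff ℝ 2 (F i))
    (hne : ∀ i t, F i t ≠ 0)
    (hde : ∀ i t, deriv (F i) t ≠ 0)
    (f : (Fin (n + 1) → ℝ) → ℝ)
    (hf : ∀ x, f x = ∏ i, F i (x i))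
    (x : Fin (n + 1) → ℝ) :
    (hessian f x).det =
      f x ^ (n + 1) *
        ((deriv (deriv (F 0)) (x 0) / F 0 (x 0)) *
            ∏ i ∈ univ.erase (0 : Fin (n + 1)),
              deriv (fun t => deriv (F i) t / F i t) (x i) +
          deriv (fun t => deriv (F 0) t / F 0 t) (x 0) *
            ∑ i ∈ univ.erase (0 : Fin (n + 1)),
              (∏ k ∈ (univ.erase (0 : Fin (n + 1))).erase i,
                  deriv (fun t => deriv (F k) t / F k t) (x k)) *
                (deriv (F i) (x i) / F i (x i)) ^ 2) := by
  classical
  have hdF : ∀ i, Differentiable ℝ (deriv (F i)) := by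
    intro i
    have h2 := hC2 i
    rw [← one_add_one_eq_two, contDiff_succ_iff_deriv] at h2
    exact h2.2.2.differentiable one_ne_zero
  have hPne : ∀ i, F i (x i) ≠ 0 := fun i => hne i (x i)
  -- first partial derivatives
  have hp1 : ∀ (j : Fin (n+1)) (y : Fin (n+1) → ℝ),
      pderiv' f j y = deriv (F j) (y j) * ∏ k ∈ univ.erase j, F k (y k) := by
    intro j y
    have hfun : (fun t => f (Function.update y j t))
        = fun t => (∏ k ∈ univ.erase j, F k (y k)) * F j t := by
      funext t
      rw [hf, ← Finset.mul_prod_erase Finset.univ _ (Finset.mem_univ j), Function.update_self,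
        mul_comm]
      congr 1
      exact Finset.prod_congr rfl fun k hk => by
        rw [Function.update_of_ne (Finset.mem_erase.1 hk).1]
    rw [pderiv', hfun, deriv_const_mul_field, mul_comm]
  -- second partial derivatives
  have hp2 : ∀ i j : Fin (n+1), hessian f x i j =
      if i = j then deriv (deriv (F i)) (x i) * ∏ k ∈ univ.erase i, F k (x k)
      else deriv (F i) (x i) * deriv (F j) (x j) *
        ∏ k ∈ (univ.erase j).erase i, F k (x k) := by
    intro i j
    have hstep : hessian f x i j = deriv (fun t =>
        deriv (F j) (Function.update x i t j) *
          ∏ k ∈ univ.erase j, F k (Function.update x i t k)) (x i) := by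
      show pderiv' (pderiv' f j) i x = _
      rw [pderiv']
      congr 1
      funext t
      rw [hp1]
    rw [hstep]
    by_cases hij : i = j
    · subst hij
      have hfun : (fun t => deriv (F i) (Function.update x i t i) *
            ∏ k ∈ univ.erase i, F k (Function.update x i t k))
          = fun t => (∏ k ∈ univ.erase i, F k (x k)) * deriv (F i) t := by
        funext t
        rw [Function.update_self, mul_comm]
        congr 1
        exact Finset.prod_congr rfl fun k hk => by
          rw [Function.update_of_ne (Finset.mem_erase.1 hk).1]
      rw [hfun, deriv_const_mul_field, if_pos rfl, mul_comm]
    · have hi : i ∈ univ.erase j := by simp [hij]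
      have hfun : (fun t => deriv (F j) (Function.update x i t j) *
            ∏ k ∈ univ.erase j, F k (Function.update x i t k))
          = fun t => (deriv (F j) (x j) * ∏ k ∈ (univ.erase j).erase i, F k (x k)) * F i t := by
        funext t
        rw [Function.update_of_ne (Ne.symm hij), ← Finset.mul_prod_erase _ _ hi,
          Function.update_self]
        have : ∏ k ∈ (univ.erase j).erase i, F k (Function.update x i t k)
            = ∏ k ∈ (univ.erase j).erase i, F k (x k) :=
          Finset.prod_congr rfl fun k hk => by
            rw [Function.update_of_ne (Finset.mem_erase.1 hk).1]
        rw [this]; ring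
      rw [hfun, deriv_const_mul_field, if_neg hij]
      ring
  -- value of d i
  have hdval : ∀ i : Fin (n+1), deriv (fun t => deriv (F i) t / F i t) (x i)
      = (deriv (deriv (F i)) (x i) * F i (x i) - deriv (F i) (x i) * deriv (F i) (x i))
        / F i (x i) ^ 2 := by
    intro i
    rw [show (fun t => deriv (F i) t / F i t) = deriv (F i) / F i from rfl, deriv_div ((hdF i).differentiableAt)
      (((hC2 i).differentiable (by norm_num)).differentiableAt) (hPne i)]
  -- the hessian as a scaled rank-one-plus-diagonal matrix
  have hmat : hessian f x = f x • Matrix.of fun i j =>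
      (if i = j then deriv (fun t => deriv (F i) t / F i t) (x i) else 0) +
        (deriv (F i) (x i) / F i (x i)) * (deriv (F j) (x j) / F j (x j)) := by
    ext i j
    rw [hp2]
    simp only [Matrix.smul_apply, Matrix.of_apply, smul_eq_mul]
    by_cases hij : i = j
    · subst hij
      rw [if_pos rfl, if_pos rfl, hdval, hf,
        ← Finset.mul_prod_erase Finset.univ _ (Finset.mem_univ i)]
      field_simp [hPne i]
      ring
    · rw [if_neg hij, if_neg hij, hf,
        ← Finset.mul_prod_erase Finset.univ _ (Finset.mem_univ j),
        ← Finset.mul_prod_erase _ _ (show i ∈ univ.erase j by simp [hij])]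
      field_simp [hPne i, hPne j]
      ring
  rw [hmat, Matrix.det_smul,
    det_diag_add_rank_one (fun i => deriv (fun t => deriv (F i) t / F i t) (x i))
      (fun i => deriv (F i) (x i) / F i (x i)),
    Fintype.card_fin]
  congr 1
  refine alg_aux _ _ _ ?_
  rw [hdval]
  field_simp [hPne 0]
  ring
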